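/- Fix an integer k ≥ 1, data a₁,…,a_k ∈ (0,∞), z₁,…,z_k ∈ {0,1}, and fix α > 0. Define N_i = z_i·1_{a_i < α} + (1-z_i)·1_{a_i > α} for i = 1,…,k, |N| = Σ_{i=1}^{k} N_i, and the scalar product Nᵀlog²(a/α) = Σ_{i=1}^{k} N_i·(log(a_i/α))². Then as β → 0, ℓ_k(z|a,(α,β)) = O( β^{|N|} · exp(-Nᵀlog²(a/α)/(2β²)) ), i.e. there exist C > 0 and β₀ > 0 such that ℓ_k(z|a,(α,β)) ≤ C·β^{|N|}·exp(-Nᵀlog²(a/α)/(2β²)) for all 0 < β < β₀. -/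

import Mathlib

open MeasureTheory Real Filter Set

/-- The standard Gaussian cumulative distribution function. -/
noncomputable def Phi (x : ℝ) : ℝ :=
  (Real.sqrt (2 * Real.pi))⁻¹ * ∫ t in Set.Iic x, Real.exp (-t ^ 2 / 2)

/-- The likelihood of the log-normal (probit) fragility model. -/
noncomputable def lik (k : ℕ) (a : Fin k → ℝ) (z : Fin k → ℕ) (α β : ℝ) : ℝ :=
  ∏ i, Phi (Real.log (a i / α) / β) ^ (z i) *
    (1 - Phi (Real.log (a i / α) / β)) ^ (1 - z i)


lemma gauss_integrable : Integrable (fun t : ℝ => Real.exp (-t ^ 2 / 2)) := by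
  have h := integrable_exp_neg_mul_sq (by norm_num : (0:ℝ) < 1/2)
  refine h.congr ?_
  filter_upwards with t
  ring_nf

lemma gauss_mul_integrable : Integrable (fun t : ℝ => t * Real.exp (-t ^ 2 / 2)) := by
  have h := integrable_mul_exp_neg_mul_sq (by norm_num : (0:ℝ) < 1/2)
  refine h.congr ?_
  filter_upwards with t
  ring_nf

lemma gauss_total : (∫ t : ℝ, Real.exp (-t ^ 2 / 2)) = Real.sqrt (2 * Real.pi) := by
  have h := integral_gaussian (1/2)
  rw [show Real.pi / (1/2) = 2 * Real.pi by ring] at h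
  rw [← h]
  congr 1 with t
  ring_nf

lemma gauss_deriv (t : ℝ) : HasDerivAt (fun s : ℝ => -Real.exp (-s ^ 2 / 2))
    (t * Real.exp (-t ^ 2 / 2)) t := by
  have h : HasDerivAt (fun s : ℝ => -s ^ 2 / 2) (-t) t := by
    have h2 := ((hasDerivAt_pow 2 t).neg).div_const 2
    refine h2.congr_deriv ?_
    push_cast; ring
  have h3 := (h.exp).neg
  refine h3.congr_deriv ?_
  ring

lemma gauss_tendsto_atBot :
    Tendsto (fun s : ℝ => -Real.exp (-s ^ 2 / 2)) atBot (nhds 0) := by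
  rw [show (0:ℝ) = -0 by ring]
  apply Tendsto.neg
  apply Real.tendsto_exp_atBot.comp
  have h1 : Tendsto (fun s : ℝ => s ^ 2) atBot atTop := by
    have := (tendsto_pow_atTop (two_ne_zero)).comp tendsto_neg_atBot_atTop (α := ℝ)
    refine this.congr fun s => ?_
    simp [neg_sq]
  have h2 : Tendsto (fun s : ℝ => -s ^ 2) atBot atBot :=
    tendsto_neg_atTop_atBot.comp h1
  exact h2.atBot_div_const two_pos

lemma gauss_tendsto_atTop :
    Tendsto (fun s : ℝ => -Real.exp (-s ^ 2 / 2)) atTop (nhds 0) := by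
  rw [show (0:ℝ) = -0 by ring]
  apply Tendsto.neg
  apply Real.tendsto_exp_atBot.comp
  have h1 : Tendsto (fun s : ℝ => s ^ 2) atTop atTop := tendsto_pow_atTop two_ne_zero
  have h2 : Tendsto (fun s : ℝ => -s ^ 2) atTop atBot :=
    tendsto_neg_atTop_atBot.comp h1
  exact h2.atBot_div_const two_pos

lemma gauss_int_Iic (x : ℝ) :
    ∫ t in Iic x, t * Real.exp (-t ^ 2 / 2) = -Real.exp (-x ^ 2 / 2) := by
  have h := integral_Iic_of_hasDerivAt_of_tendsto' (a := x) (m := 0)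
    (fun t _ => gauss_deriv t) gauss_mul_integrable.integrableOn gauss_tendsto_atBot
  simpa using h

lemma gauss_int_Ioi (x : ℝ) :
    ∫ t in Ioi x, t * Real.exp (-t ^ 2 / 2) = Real.exp (-x ^ 2 / 2) := by
  have h := integral_Ioi_of_hasDerivAt_of_tendsto' (a := x) (m := 0)
    (fun t _ => gauss_deriv t) gauss_mul_integrable.integrableOn gauss_tendsto_atTop
  simpa using h

lemma sqrt_two_pi_pos : 0 < Real.sqrt (2 * Real.pi) :=
  Real.sqrt_pos.2 (by positivity)

lemma Phi_nonneg (x : ℝ) : 0 ≤ Phi x := by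
  apply mul_nonneg (by positivity)
  apply integral_nonneg
  intro t; positivity

lemma Phi_le_one (x : ℝ) : Phi x ≤ 1 := by
  rw [Phi]
  rw [show (1:ℝ) = (Real.sqrt (2 * Real.pi))⁻¹ * Real.sqrt (2 * Real.pi) by
    rw [inv_mul_cancel₀ sqrt_two_pi_pos.ne']]
  apply mul_le_mul_of_nonneg_left _ (by positivity)
  rw [← gauss_total]
  exact setIntegral_le_integral gauss_integrable
    (Filter.Eventually.of_forall fun t => by positivity)

lemma one_sub_Phi (x : ℝ) :
    1 - Phi x = (Real.sqrt (2 * Real.pi))⁻¹ * ∫ t in Ioi x, Real.exp (-t ^ 2 / 2) := by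
  have h := intervalIntegral.integral_Iic_add_Ioi (b := x) (μ := volume)
    gauss_integrable.integrableOn gauss_integrable.integrableOn
  rw [Phi, sub_eq_iff_eq_add, ← mul_add, add_comm, h, gauss_total,
    inv_mul_cancel₀ sqrt_two_pi_pos.ne']

lemma tail_Iic {x : ℝ} (hx : x < 0) :
    ∫ t in Iic x, Real.exp (-t ^ 2 / 2) ≤ Real.exp (-x ^ 2 / 2) / (-x) := by
  have hmono : ∫ t in Iic x, Real.exp (-t ^ 2 / 2)
      ≤ ∫ t in Iic x, x⁻¹ * (t * Real.exp (-t ^ 2 / 2)) := by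
    apply setIntegral_mono_on gauss_integrable.integrableOn
      ((gauss_mul_integrable.integrableOn).const_mul _) measurableSet_Iic
    intro t ht
    simp only [mem_Iic] at ht
    rw [← mul_assoc]
    nth_rewrite 1 [← one_mul (Real.exp (-t ^ 2 / 2))]
    apply mul_le_mul_of_nonneg_right _ (Real.exp_nonneg _)
    rw [← div_eq_inv_mul]
    rw [le_div_iff_of_neg hx]
    linarith
  calc ∫ t in Iic x, Real.exp (-t ^ 2 / 2)
      ≤ ∫ t in Iic x, x⁻¹ * (t * Real.exp (-t ^ 2 / 2)) := hmono
    _ = x⁻¹ * ∫ t in Iic x, t * Real.exp (-t ^ 2 / 2) := integral_const_mul _ _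
    _ = Real.exp (-x ^ 2 / 2) / (-x) := by
        rw [gauss_int_Iic]; rw [div_neg, div_eq_inv_mul]; ring
  
lemma tail_Ioi {x : ℝ} (hx : 0 < x) :
    ∫ t in Ioi x, Real.exp (-t ^ 2 / 2) ≤ Real.exp (-x ^ 2 / 2) / x := by
  have hmono : ∫ t in Ioi x, Real.exp (-t ^ 2 / 2)
      ≤ ∫ t in Ioi x, x⁻¹ * (t * Real.exp (-t ^ 2 / 2)) := by
    apply setIntegral_mono_on gauss_integrable.integrableOn
      ((gauss_mul_integrable.integrableOn).const_mul _) measurableSet_Ioi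
    intro t ht
    simp only [mem_Ioi] at ht
    rw [← mul_assoc]
    nth_rewrite 1 [← one_mul (Real.exp (-t ^ 2 / 2))]
    apply mul_le_mul_of_nonneg_right _ (Real.exp_nonneg _)
    rw [← div_eq_inv_mul, le_div_iff₀ hx]
    linarith
  calc ∫ t in Ioi x, Real.exp (-t ^ 2 / 2)
      ≤ ∫ t in Ioi x, x⁻¹ * (t * Real.exp (-t ^ 2 / 2)) := hmono
    _ = x⁻¹ * ∫ t in Ioi x, t * Real.exp (-t ^ 2 / 2) := integral_const_mul _ _
    _ = Real.exp (-x ^ 2 / 2) / x := by rw [gauss_int_Ioi]; field_simp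

lemma Phi_bound {c β : ℝ} (hc : c < 0) (hβ : 0 < β) :
    Phi (c / β) ≤ (Real.sqrt (2 * Real.pi))⁻¹ * |c|⁻¹ * β
      * Real.exp (-c ^ 2 / (2 * β ^ 2)) := by
  have hcb : c / β < 0 := div_neg_of_neg_of_pos hc hβ
  have h1 : Phi (c / β) ≤ (Real.sqrt (2 * Real.pi))⁻¹
      * (Real.exp (-(c / β) ^ 2 / 2) / (-(c / β))) := by
    rw [Phi]
    exact mul_le_mul_of_nonneg_left (tail_Iic hcb) (by positivity)
  refine h1.trans (le_of_eq ?_)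
  rw [abs_of_neg hc]
  rw [show -(c / β) ^ 2 / 2 = -c ^ 2 / (2 * β ^ 2) by rw [div_pow]; ring]
  field_simp

lemma one_sub_Phi_bound {c β : ℝ} (hc : 0 < c) (hβ : 0 < β) :
    1 - Phi (c / β) ≤ (Real.sqrt (2 * Real.pi))⁻¹ * |c|⁻¹ * β
      * Real.exp (-c ^ 2 / (2 * β ^ 2)) := by
  have hcb : 0 < c / β := div_pos hc hβ
  have h1 : 1 - Phi (c / β) ≤ (Real.sqrt (2 * Real.pi))⁻¹
      * (Real.exp (-(c / β) ^ 2 / 2) / (c / β)) := by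
    rw [one_sub_Phi]
    exact mul_le_mul_of_nonneg_left (tail_Ioi hcb) (by positivity)
  refine h1.trans (le_of_eq ?_)
  rw [abs_of_pos hc]
  rw [show -(c / β) ^ 2 / 2 = -c ^ 2 / (2 * β ^ 2) by rw [div_pow]; ring]
  field_simp

/-- Fix `k ≥ 1`, data `aᵢ ∈ (0,∞)`, `zᵢ ∈ {0,1}` and `α > 0`. With
`Nᵢ = zᵢ·1_{aᵢ<α} + (1-zᵢ)·1_{aᵢ>α}`, as `β → 0` one has
`ℓ_k(z|a,(α,β)) = O(β^{|N|} exp(-Nᵀlog²(a/α)/(2β²)))`. -/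
theorem stmt3 (k : ℕ) (hk : 1 ≤ k) (a : Fin k → ℝ) (ha : ∀ i, 0 < a i)
    (z : Fin k → ℕ) (hz : ∀ i, z i = 0 ∨ z i = 1) (α : ℝ) (hα : 0 < α)
    (N : Fin k → ℕ)
    (hN : ∀ i, N i = if a i < α then z i else if α < a i then 1 - z i else 0) :
    ∃ C > (0 : ℝ), ∃ β₀ > (0 : ℝ), ∀ β : ℝ, 0 < β → β < β₀ →
      lik k a z α β ≤ C * β ^ (∑ i, N i) *
        Real.exp (-(∑ i, (N i : ℝ) * Real.log (a i / α) ^ 2) / (2 * β ^ 2)) := by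
  set x : Fin k → ℝ := fun i => Real.log (a i / α) with hx
  set K : Fin k → ℝ := fun i => (Real.sqrt (2 * Real.pi))⁻¹ * |x i|⁻¹ with hK
  -- If N i = 1 then x i ≠ 0 matching sign
  have hsign : ∀ i, N i = 1 → (a i < α ∧ z i = 1 ∧ x i < 0) ∨
      (α < a i ∧ z i = 0 ∧ 0 < x i) := by
    intro i hNi
    rw [hN i] at hNi
    by_cases h1 : a i < α
    · rw [if_pos h1] at hNi
      refine Or.inl ⟨h1, hNi, ?_⟩
      apply Real.log_neg (div_pos (ha i) hα)
      rw [div_lt_one hα]; exact h1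
    · rw [if_neg h1] at hNi
      by_cases h2 : α < a i
      · rw [if_pos h2] at hNi
        have hzi : z i = 0 := by omega
        refine Or.inr ⟨h2, hzi, ?_⟩
        apply Real.log_pos
        rw [lt_div_iff₀ hα]; linarith
      · rw [if_neg h2] at hNi; omega
  have hN01 : ∀ i, N i = 0 ∨ N i = 1 := by
    intro i; rw [hN i]
    rcases hz i with h | h <;> split_ifs <;> omega
  refine ⟨∏ i, K i ^ N i, ?_, 1, one_pos, ?_⟩
  · apply Finset.prod_pos
    intro i _
    rcases hN01 i with h | h
    · rw [h, pow_zero]; exact one_pos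
    · rw [h, pow_one, hK]
      rcases hsign i h with ⟨_, _, hx0⟩ | ⟨_, _, hx0⟩
      · have : |x i| > 0 := abs_pos.2 hx0.ne
        positivity
      · have : |x i| > 0 := abs_pos.2 hx0.ne'
        positivity
  intro β hβ _
  have key : ∀ i : Fin k,
      Phi (x i / β) ^ (z i) * (1 - Phi (x i / β)) ^ (1 - z i)
        ≤ (K i * β * Real.exp (-(x i) ^ 2 / (2 * β ^ 2))) ^ (N i) := by
    intro i
    rcases hN01 i with h | h
    · rw [h, pow_zero]
      apply mul_le_one₀
      · exact pow_le_one₀ (Phi_nonneg _) (Phi_le_one _)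
      · exact pow_nonneg (by linarith [Phi_le_one (x i / β)]) _
      · exact pow_le_one₀ (by linarith [Phi_le_one (x i / β)])
          (by linarith [Phi_nonneg (x i / β)])
    · rw [h, pow_one]
      rcases hsign i h with ⟨_, hzi, hx0⟩ | ⟨_, hzi, hx0⟩
      · rw [hzi]
        simp only [pow_one, Nat.sub_self, pow_zero, mul_one]
        exact Phi_bound hx0 hβ
      · rw [hzi]
        simp only [pow_zero, one_mul, Nat.sub_zero, pow_one]
        exact one_sub_Phi_bound hx0 hβ
  have step1 : lik k a z α β ≤
      ∏ i, (K i * β * Real.exp (-(x i) ^ 2 / (2 * β ^ 2))) ^ (N i) := by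
    rw [lik]
    apply Finset.prod_le_prod
    · intro i _
      exact mul_nonneg (pow_nonneg (Phi_nonneg _) _)
        (pow_nonneg (by linarith [Phi_le_one (x i / β)]) _)
    · intro i _
      exact key i
  refine step1.trans (le_of_eq ?_)
  have expand : ∀ i : Fin k,
      (K i * β * Real.exp (-(x i) ^ 2 / (2 * β ^ 2))) ^ (N i)
        = K i ^ N i * β ^ N i * Real.exp ((N i : ℝ) * (-(x i) ^ 2 / (2 * β ^ 2))) := by
    intro i
    rw [mul_pow, mul_pow, ← Real.exp_nat_mul]
  rw [Finset.prod_congr rfl (fun i _ => expand i), Finset.prod_mul_distrib,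
    Finset.prod_mul_distrib, ← Real.exp_sum, Finset.prod_pow_eq_pow_sum]
  congr 1
  rw [neg_div, Finset.sum_div, ← Finset.sum_neg_distrib]
  exact congrArg Real.exp (Finset.sum_congr rfl fun i _ => by ring)
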